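/- Inverse of the unitriangular Gauss factors in the commutative case: with J = E H F as above, the entries of E⁻¹ and F⁻¹ are (E⁻¹)_{ij} = (−1)^{j−i} det(J^{i,…,ĵ,…,n}_{i+1,…,n}) / det(J^{i+1,…,n}_{i+1,…,n}) and (F⁻¹)_{ji} = (−1)^{j−i} det(J^{i+1,…,n}_{i,…,ĵ,…,n}) / det(J^{i+1,…,n}_{i+1,…,n}) for i ≤ j, where ĵ means index j is omitted; and (E⁻¹)_{ij} = (F⁻¹)_{ji} = 0 for j < i. -/

import Mathlib

open Matrix

variable {K : Type*} [Field K] {n : ℕ}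

/-- The trailing principal minor `det(J^{k,…,n}_{k,…,n})`. -/
def trailMinor (J : Matrix (Fin n) (Fin n) K) (k : Fin n) : K :=
  Matrix.det (Matrix.of fun a b : {x : Fin n // k ≤ x} => J a b)

/-- The strict trailing principal minor `det(J^{k+1,…,n}_{k+1,…,n})`. -/
def strictTrailMinor (J : Matrix (Fin n) (Fin n) K) (k : Fin n) : K :=
  Matrix.det (Matrix.of fun a b : {x : Fin n // k < x} => J a b)

/-- The order-preserving enumeration of `{i,…,n}∖{j}` by `{x > i}`:
position `a` (with `i < a`) corresponds to `a − 1` if `a ≤ j`, else to `a`. -/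
def omitIdx {n : ℕ} (j a : Fin n) : Fin n :=
  if a ≤ j then ⟨a.val - 1, lt_of_le_of_lt (Nat.sub_le _ _) a.isLt⟩ else a

/-- The minor `det(J^{i,…,ĵ,…,n}_{i+1,…,n})`: rows `{i,…,n}` omitting `j`,
columns `{x > i}`. -/
def minorEinv (J : Matrix (Fin n) (Fin n) K) (i j : Fin n) : K :=
  Matrix.det (Matrix.of fun a b : {x : Fin n // i < x} => J (omitIdx j a) b)

/-- The minor `det(J^{i+1,…,n}_{i,…,ĵ,…,n})`: rows `{x > i}`, columns
`{i,…,n}` omitting `j`. -/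
def minorFinv (J : Matrix (Fin n) (Fin n) K) (i j : Fin n) : K :=
  Matrix.det (Matrix.of fun a b : {x : Fin n // i < x} => J a (omitIdx j b))

/-- enumeration of `{x : Fin n // i < x}` by `Fin (n - i - 2 + 1)` (valid when `i+1 < n`). -/
def shiftEquiv {n : ℕ} (i : Fin n) (h : i.val + 1 < n) :
    Fin (n - i.val - 2 + 1) ≃ {x : Fin n // i < x} where
  toFun k := ⟨⟨i.val + 1 + k.val, by have := k.isLt; omega⟩, by simp [Fin.lt_def]; omega⟩
  invFun x := ⟨(x : Fin n).val - i.val - 1, by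
    have h1 := x.prop; rw [Fin.lt_def] at h1; have h2 := (x : Fin n).isLt; omega⟩
  left_inv k := by ext; simp; omega
  right_inv x := by
    have h1 := x.prop; rw [Fin.lt_def] at h1
    ext; simp; omega

@[simp] lemma shiftEquiv_apply_val {n : ℕ} (i : Fin n) (h : i.val + 1 < n)
    (k : Fin (n - i.val - 2 + 1)) :
    ((shiftEquiv i h k : {x : Fin n // i < x}) : Fin n).val = i.val + 1 + k.val := rfl

@[simp] lemma shiftEquiv_symm_apply_val {n : ℕ} (i : Fin n) (h : i.val + 1 < n)
    (x : {x : Fin n // i < x}) :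
    (((shiftEquiv i h).symm x : Fin (n - i.val - 2 + 1)) : ℕ) = (x : Fin n).val - i.val - 1 := rfl

lemma strictTrailMinor_ne_zero (J : Matrix (Fin n) (Fin n) K)
    (hminor : ∀ k : Fin n, trailMinor J k ≠ 0) (i : Fin n) :
    strictTrailMinor J i ≠ 0 := by
  rcases eq_or_lt_of_le (Nat.succ_le_of_lt i.isLt) with h | h
  · haveI : IsEmpty {x : Fin n // i < x} := by
      constructor; rintro ⟨x, hx⟩
      have h2 := x.isLt
      rw [Fin.lt_def] at hx
      omega
    simp [strictTrailMinor, Matrix.det_isEmpty]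
  · have hM : (Matrix.of fun a b : {x : Fin n // i < x} => J a b)
        = (Matrix.of fun a b : {x : Fin n // (⟨i.val + 1, h⟩ : Fin n) ≤ x} => J a b).submatrix
          (Equiv.subtypeEquivRight (q := fun x : Fin n => (⟨i.val + 1, h⟩ : Fin n) ≤ x)
            (fun x => Iff.rfl))
          (Equiv.subtypeEquivRight (fun x => Iff.rfl)) := by
      ext a b
      simp [Equiv.subtypeEquivRight]
      rfl
    have hEq : strictTrailMinor J i = trailMinor J ⟨i.val + 1, h⟩ := by
      rw [strictTrailMinor, trailMinor, hM]
      exact Matrix.det_submatrix_equiv_self _ _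
    rw [hEq]; exact hminor _

lemma einv_aux (J E H F : Matrix (Fin n) (Fin n) K)
    (hminor : ∀ k : Fin n, trailMinor J k ≠ 0)
    (hE1 : ∀ i, E i i = 1) (hE0 : ∀ i j, j < i → E i j = 0)
    (hH0 : ∀ i j, i ≠ j → H i j = 0)
    (hF0 : ∀ i j, i < j → F i j = 0)
    (hJ : J = E * H * F) (i j : Fin n) :
    (i ≤ j → E⁻¹ i j = (-1 : K) ^ ((j : ℕ) - (i : ℕ)) * minorEinv J i j /
        strictTrailMinor J i)
    ∧ (j < i → E⁻¹ i j = 0) := by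
  have hBT : E.BlockTriangular id := fun a b h => hE0 a b h
  have hdetE : E.det = 1 := by
    rw [Matrix.det_of_upperTriangular hBT]; simp [hE1]
  have hUnit : IsUnit E.det := by rw [hdetE]; exact isUnit_one
  haveI := E.invertibleOfIsUnitDet hUnit
  have hEinvBT : BlockTriangular E⁻¹ id :=
    Matrix.blockTriangular_inv_of_blockTriangular hBT
  have hEinv0 : ∀ k : Fin n, k < i → E⁻¹ i k = 0 := fun k hk => hEinvBT hk
  refine ⟨?_, fun hji => hEinv0 j hji⟩
  intro hij
  have hEinvii : E⁻¹ i i = 1 := by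
    have h1 : (E⁻¹ * E) i i = 1 := by rw [Matrix.nonsing_inv_mul E hUnit]; simp
    rw [Matrix.mul_apply] at h1
    rw [Finset.sum_eq_single i (fun k _ hk => ?_) (by simp)] at h1
    · rwa [hE1, mul_one] at h1
    · rcases lt_or_gt_of_ne hk with h | h
      · rw [hEinv0 k h, zero_mul]
      · rw [hE0 k i h, mul_zero]
  have hEJ : E⁻¹ * J = H * F := by
    rw [hJ, ← Matrix.mul_assoc, ← Matrix.mul_assoc, Matrix.nonsing_inv_mul E hUnit,
      Matrix.one_mul]
  have hHF : ∀ b : Fin n, i < b → (H * F) i b = 0 := by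
    intro b hb
    rw [Matrix.mul_apply]
    apply Finset.sum_eq_zero
    intro k _
    rcases eq_or_ne i k with rfl | hk
    · rw [hF0 i b hb, mul_zero]
    · rw [hH0 i k hk, zero_mul]
  set A : Matrix {x : Fin n // i < x} {x : Fin n // i < x} K :=
    Matrix.of (fun a b : {x : Fin n // i < x} => J a b) with hA
  have hdetA : A.det = strictTrailMinor J i := rfl
  have hdAne : A.det ≠ 0 := by rw [hdetA]; exact strictTrailMinor_ne_zero J hminor i
  have hUnitA : IsUnit A.det := isUnit_iff_ne_zero.mpr hdAne
  have hsys : (fun k : {x : Fin n // i < x} => E⁻¹ i ↑k) ᵥ* A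
      = (fun b : {x : Fin n // i < x} => -(J ↑i ↑b)) := by
    funext b
    have h0 : ∑ k : Fin n, E⁻¹ i k * J k ↑b = 0 := by
      have h := congrFun (congrFun hEJ i) ↑b
      rw [Matrix.mul_apply] at h
      rw [h]; exact hHF ↑b b.prop
    have h1 : ∑ k ∈ Finset.univ.filter (fun k : Fin n => i ≤ k), E⁻¹ i k * J k ↑b
        = ∑ k : Fin n, E⁻¹ i k * J k ↑b :=
      Finset.sum_filter_of_ne (fun k _ hne => by
        by_contra hlt
        exact hne (by rw [hEinv0 k (not_le.mp hlt), zero_mul]))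
    have h2 : Finset.univ.filter (fun k : Fin n => i ≤ k)
        = insert i (Finset.univ.filter (fun k : Fin n => i < k)) := by
      ext k
      simp only [Finset.mem_filter, Finset.mem_univ, true_and, Finset.mem_insert]
      rw [Fin.le_def, Fin.lt_def, Fin.ext_iff]
      omega
    have h3 : ∑ k ∈ Finset.univ.filter (fun k : Fin n => i < k), E⁻¹ i k * J k ↑b
        = ∑ k : {x : Fin n // i < x}, E⁻¹ i ↑k * J ↑k ↑b :=
      Finset.sum_subtype _ (by simp) _
    rw [h2, Finset.sum_insert (by simp), h3, hEinvii, one_mul] at h1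
    rw [← h1] at h0
    have h4 := eq_neg_of_add_eq_zero_right h0
    simpa [Matrix.vecMul, dotProduct, hA] using h4
  have hu : A.det • (fun k : {x : Fin n // i < x} => E⁻¹ i ↑k)
      = Matrix.cramer Aᵀ (fun b : {x : Fin n // i < x} => -(J ↑i ↑b)) := by
    have hAAinv : A * A⁻¹ = 1 := Matrix.mul_nonsing_inv A hUnitA
    have hback : (fun k : {x : Fin n // i < x} => E⁻¹ i ↑k)
        = ((fun k : {x : Fin n // i < x} => E⁻¹ i ↑k) ᵥ* A) ᵥ* A⁻¹ := by
      rw [Matrix.vecMul_vecMul, hAAinv, Matrix.vecMul_one]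
    rw [hback, hsys]
    exact Matrix.det_smul_inv_vecMul_eq_cramer_transpose A _ hUnitA
  rcases eq_or_lt_of_le hij with heq | hlt
  · subst heq
    have hmm : minorEinv J i i = strictTrailMinor J i := by
      rw [minorEinv, strictTrailMinor]
      congr 1
      ext a b
      simp [omitIdx, not_le.mpr a.prop]
    rw [hEinvii, hmm, Nat.sub_self, pow_zero, one_mul,
      div_self (strictTrailMinor_ne_zero J hminor i)]
  · have hn : i.val + 1 < n := by
      have h5 := j.isLt; have h6 := Fin.lt_def.mp hlt; omega
    have hij' : i.val < j.val := Fin.lt_def.mp hlt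
    set e := shiftEquiv i hn with he
    set jS : {x : Fin n // i < x} := ⟨j, hlt⟩ with hjS
    set jm : Fin (n - i.val - 2 + 1) := ⟨j.val - i.val - 1, by omega⟩ with hjm
    set σ : Equiv.Perm {x : Fin n // i < x} := e.permCongr (Fin.cycleRange jm) with hσ
    have hσval : ∀ a : {x : Fin n // i < x}, ((σ a : {x : Fin n // i < x}) : Fin n).val
        = if (a : Fin n).val < j.val then (a : Fin n).val + 1
          else if (a : Fin n).val = j.val then i.val + 1 else (a : Fin n).val := by
      intro a
      have hai := Fin.lt_def.mp a.prop
      have han := (a : Fin n).isLt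
      rw [hσ, Equiv.permCongr_apply, he, shiftEquiv_apply_val]
      rcases lt_trichotomy ((a : Fin n)).val j.val with hc | hc | hc
      · have hlt2 : (shiftEquiv i hn).symm a < jm := by
          rw [Fin.lt_def, shiftEquiv_symm_apply_val, hjm]; simp; omega
        rw [Fin.coe_cycleRange_of_lt hlt2, shiftEquiv_symm_apply_val]
        rw [if_pos hc]; omega
      · have heq2 : (shiftEquiv i hn).symm a = jm := by
          rw [Fin.ext_iff, shiftEquiv_symm_apply_val, hjm]; simp; omega
        rw [heq2, Fin.cycleRange_of_eq rfl]
        rw [if_neg (by omega), if_pos hc]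
        simp
      · have hgt2 : jm < (shiftEquiv i hn).symm a := by
          rw [Fin.lt_def, shiftEquiv_symm_apply_val, hjm]; simp; omega
        rw [Fin.cycleRange_of_gt hgt2, shiftEquiv_symm_apply_val]
        rw [if_neg (by omega), if_neg (by omega)]
        omega
    have hmain : A.updateRow jS (fun b : {x : Fin n // i < x} => J ↑i ↑b)
        = (Matrix.of fun a b : {x : Fin n // i < x} => J (omitIdx j ↑a) ↑b).submatrix (⇑σ) id := by
      ext a b
      rw [Matrix.submatrix_apply, Matrix.of_apply, id_eq]
      have hai := Fin.lt_def.mp a.prop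
      have hs := hσval a
      rcases eq_or_ne a jS with rfl | hne
      · rw [Matrix.updateRow_self]
        have h5 : ((σ jS : {x : Fin n // i < x}) : Fin n).val = i.val + 1 := by
          rw [hs, if_neg (by simp [hjS]), if_pos (by simp [hjS])]
        have h6 : omitIdx j ↑(σ jS) = i := by
          rw [omitIdx, if_pos (by rw [Fin.le_def, h5]; omega)]
          ext; simp [h5]
        rw [h6]
      · have hvne : (a : Fin n).val ≠ j.val := by
          intro hv; exact hne (Subtype.ext (Fin.ext (by simpa [hjS] using hv)))
        rw [Matrix.updateRow_ne hne]
        have hAab : A a b = J ↑a ↑b := rfl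
        rw [hAab]
        rcases lt_or_gt_of_ne hvne with hc | hc
        · have h5 : ((σ a : {x : Fin n // i < x}) : Fin n).val = (a : Fin n).val + 1 := by
            rw [hs, if_pos hc]
          have h6 : omitIdx j ↑(σ a) = ↑a := by
            rw [omitIdx, if_pos (by rw [Fin.le_def, h5]; omega)]
            ext; simp [h5]
          rw [h6]
        · have h5 : ((σ a : {x : Fin n // i < x}) : Fin n).val = (a : Fin n).val := by
            rw [hs, if_neg (by omega), if_neg (by omega)]
          have h6 : omitIdx j ↑(σ a) = ↑a := by
            rw [omitIdx, if_neg (by rw [Fin.le_def, h5]; omega)]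
            exact Fin.ext h5
          rw [h6]
    have hdetmain : (A.updateRow jS (fun b : {x : Fin n // i < x} => J ↑i ↑b)).det
        = (-1 : K) ^ (j.val - i.val - 1) * minorEinv J i j := by
      rw [hmain, Matrix.det_permute]
      have hsign : Equiv.Perm.sign σ = (-1 : ℤˣ) ^ (j.val - i.val - 1) := by
        rw [hσ, Equiv.Perm.sign_permCongr, Fin.sign_cycleRange, hjm]
      rw [hsign, minorEinv]
      simp [Units.val_pow_eq_pow_val]
    have hval : A.det * E⁻¹ i j
        = Matrix.cramer Aᵀ (fun b : {x : Fin n // i < x} => -(J ↑i ↑b)) jS := by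
      have h7 := congrFun hu jS
      simpa [hjS] using h7
    have hcr : Matrix.cramer Aᵀ (fun b : {x : Fin n // i < x} => -(J ↑i ↑b)) jS
        = (A.updateRow jS (fun b : {x : Fin n // i < x} => -(J ↑i ↑b))).det := by
      rw [Matrix.cramer_apply, Matrix.updateCol_transpose, Matrix.det_transpose]
    have hneg : (fun b : {x : Fin n // i < x} => -(J ↑i ↑b))
        = (-1 : K) • (fun b : {x : Fin n // i < x} => J ↑i ↑b) := by
      funext b; simp
    have hd2 : (-1 : K) ^ (j.val - i.val) = (-1) * (-1) ^ (j.val - i.val - 1) := by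
      conv_lhs => rw [show j.val - i.val = (j.val - i.val - 1) + 1 from by omega]
      rw [pow_succ]
      ring
    have hfin : A.det * E⁻¹ i j = (-1 : K) ^ (j.val - i.val) * minorEinv J i j := by
      rw [hval, hcr, hneg, Matrix.det_updateRow_smul, hdetmain, hd2]
      ring
    rw [← hdetA, eq_div_iff hdAne]
    linear_combination hfin

lemma trailMinor_transpose (J : Matrix (Fin n) (Fin n) K) (k : Fin n) :
    trailMinor Jᵀ k = trailMinor J k := by
  have h : (Matrix.of fun a b : {x : Fin n // k ≤ x} => Jᵀ ↑a ↑b)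
      = (Matrix.of fun a b : {x : Fin n // k ≤ x} => J ↑a ↑b)ᵀ := rfl
  rw [trailMinor, h, Matrix.det_transpose, trailMinor]

lemma strictTrailMinor_transpose (J : Matrix (Fin n) (Fin n) K) (k : Fin n) :
    strictTrailMinor Jᵀ k = strictTrailMinor J k := by
  have h : (Matrix.of fun a b : {x : Fin n // k < x} => Jᵀ ↑a ↑b)
      = (Matrix.of fun a b : {x : Fin n // k < x} => J ↑a ↑b)ᵀ := rfl
  rw [strictTrailMinor, h, Matrix.det_transpose, strictTrailMinor]

lemma minorEinv_transpose (J : Matrix (Fin n) (Fin n) K) (i j : Fin n) :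
    minorEinv Jᵀ i j = minorFinv J i j := by
  have h : (Matrix.of fun a b : {x : Fin n // i < x} => Jᵀ (omitIdx j ↑a) ↑b)
      = (Matrix.of fun a b : {x : Fin n // i < x} => J ↑a (omitIdx j ↑b))ᵀ := rfl
  rw [minorEinv, h, Matrix.det_transpose, minorFinv]

/-- inverses of the unitriangular Gauss factors in the
commutative case.  With `J = E H F` the Gauss decomposition (all trailing
principal minors nonzero), the entries of `E⁻¹` and `F⁻¹` are, for `i ≤ j`,
`(E⁻¹)_{ij} = (−1)^{j−i} det(J^{i,…,ĵ,…,n}_{i+1,…,n}) / det(J^{i+1,…,n}_{i+1,…,n})`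
and
`(F⁻¹)_{ji} = (−1)^{j−i} det(J^{i+1,…,n}_{i,…,ĵ,…,n}) / det(J^{i+1,…,n}_{i+1,…,n})`,
while `(E⁻¹)_{ij} = (F⁻¹)_{ji} = 0` for `j < i`. -/
theorem stmt16 (J E H F : Matrix (Fin n) (Fin n) K)
    (hminor : ∀ k : Fin n, trailMinor J k ≠ 0)
    (hE1 : ∀ i, E i i = 1) (hE0 : ∀ i j, j < i → E i j = 0)
    (hH0 : ∀ i j, i ≠ j → H i j = 0)
    (hF1 : ∀ i, F i i = 1) (hF0 : ∀ i j, i < j → F i j = 0)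
    (hJ : J = E * H * F) :
    (∀ i j : Fin n, i ≤ j →
      E⁻¹ i j = (-1 : K) ^ ((j : ℕ) - (i : ℕ)) * minorEinv J i j /
        strictTrailMinor J i) ∧
    (∀ i j : Fin n, i ≤ j →
      F⁻¹ j i = (-1 : K) ^ ((j : ℕ) - (i : ℕ)) * minorFinv J i j /
        strictTrailMinor J i) ∧
    (∀ i j : Fin n, j < i → E⁻¹ i j = 0 ∧ F⁻¹ j i = 0) := by
  have hHsymm : Hᵀ = H := by
    ext a b
    rcases eq_or_ne a b with rfl | hab
    · rfl
    · rw [Matrix.transpose_apply, hH0 b a (Ne.symm hab), hH0 a b hab]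
  have hJT : Jᵀ = Fᵀ * H * Eᵀ := by
    rw [hJ, Matrix.transpose_mul, Matrix.transpose_mul, hHsymm, Matrix.mul_assoc]
  have hminorT : ∀ k : Fin n, trailMinor Jᵀ k ≠ 0 := fun k => by
    rw [trailMinor_transpose]; exact hminor k
  have hauxE := fun i j : Fin n =>
    einv_aux J E H F hminor hE1 hE0 hH0 hF0 hJ i j
  have hauxF := fun i j : Fin n =>
    einv_aux Jᵀ Fᵀ H Eᵀ hminorT (fun i => hF1 i) (fun i j h => hF0 j i h) hH0
      (fun i j h => hE0 j i h) hJT i j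
  have hFT : ∀ i j : Fin n, (Fᵀ)⁻¹ i j = F⁻¹ j i := fun i j => by
    rw [← Matrix.transpose_nonsing_inv, Matrix.transpose_apply]
  refine ⟨fun i j hij => (hauxE i j).1 hij, fun i j hij => ?_, fun i j hji =>
    ⟨(hauxE i j).2 hji, ?_⟩⟩
  · have h := (hauxF i j).1 hij
    rwa [hFT, minorEinv_transpose, strictTrailMinor_transpose] at h
  · have h := (hauxF i j).2 hji
    rwa [hFT] at h
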